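/- (Mosco continuity of state-dependent quadratic dissipation potentials on L²) Let Ω ⊂ ℝ^d be a bounded open set, I ∈ ℕ, and let A : Ω × ℝ^I → ℝ^{I×I}_{sym} be a Carathéodory function that is uniformly elliptic and bounded with constant C_A ≥ 1. For u ∈ L²(Ω;ℝ^I) define Ψ_u(v) = ∫_Ω ½⟨A(x,u(x))v(x), v(x)⟩ dx for v ∈ L²(Ω;ℝ^I). If u_n → u strongly in L²(Ω;ℝ^I), then Ψ_{u_n} Mosco-converges to Ψ_u in L²(Ω;ℝ^I); in particular: (i) for every sequence v_n ⇀ v converging weakly in L²(Ω;ℝ^I), Ψ_u(v) ≤ liminf_n Ψ_{u_n}(v_n); (ii) for every v ∈ L²(Ω;ℝ^I), Ψ_{u_n}(v) → Ψ_u(v), so constant sequences are recovery sequences. -/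

import Mathlib

open MeasureTheory Filter Topology Set Matrix

noncomputable section

set_option maxHeartbeats 2000000

section aux


variable {α : Type*} [MeasurableSpace α] {μ : Measure α} {I : ℕ}

private lemma dot_self_nonneg' (v : Fin I → ℝ) : 0 ≤ v ⬝ᵥ v :=
  Finset.sum_nonneg fun i _ => mul_self_nonneg _

private lemma dot_self_eq_norm_sq (v : EuclideanSpace ℝ (Fin I)) :
    (v : Fin I → ℝ) ⬝ᵥ (v : Fin I → ℝ) = ‖v‖ ^ 2 := by
  rw [EuclideanSpace.norm_eq, Real.sq_sqrt (Finset.sum_nonneg fun i _ => sq_nonneg _)]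
  simp [dotProduct, Real.norm_eq_abs, sq_abs, sq]

private lemma symm_dot (M : Matrix (Fin I) (Fin I) ℝ) (hM : M.IsSymm) (v w : Fin I → ℝ) :
    M.mulVec v ⬝ᵥ w = M.mulVec w ⬝ᵥ v := by
  simp only [Matrix.mulVec, dotProduct, Finset.sum_mul]
  rw [Finset.sum_comm]
  refine Finset.sum_congr rfl fun i _ => Finset.sum_congr rfl fun j _ => ?_
  rw [← hM.apply i j]
  ring

private lemma quad_CS (M : Matrix (Fin I) (Fin I) ℝ) (hM : M.IsSymm)
    (hpos : ∀ w, 0 ≤ M.mulVec w ⬝ᵥ w) (v w : Fin I → ℝ) :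
    (M.mulVec v ⬝ᵥ w) ^ 2 ≤ (M.mulVec v ⬝ᵥ v) * (M.mulVec w ⬝ᵥ w) := by
  have key : ∀ t : ℝ, 0 ≤ (M.mulVec w ⬝ᵥ w) * (t * t) + (2 * (M.mulVec v ⬝ᵥ w)) * t +
      (M.mulVec v ⬝ᵥ v) := by
    intro t
    have h := hpos (v + t • w)
    have hs := symm_dot M hM w v
    simp only [Matrix.mulVec_add, Matrix.mulVec_smul, add_dotProduct,
      dotProduct_add, smul_dotProduct, dotProduct_smul, smul_eq_mul] at h
    rw [hs] at h
    nlinarith [h]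
  have hd := discrim_le_zero key
  rw [discrim] at hd
  nlinarith [hd]

private lemma quad_lower (M : Matrix (Fin I) (Fin I) ℝ) (hM : M.IsSymm)
    (hpos : ∀ w, 0 ≤ M.mulVec w ⬝ᵥ w) (p q : Fin I → ℝ) :
    M.mulVec q ⬝ᵥ p - (1/2) * (M.mulVec q ⬝ᵥ q) ≤ (1/2) * (M.mulVec p ⬝ᵥ p) := by
  have h := hpos (p - q)
  have hs := symm_dot M hM p q
  simp only [Matrix.mulVec_sub, Matrix.sub_mulVec, sub_dotProduct,
    dotProduct_sub] at h
  linarith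

private lemma mulVec_dot_self_le {CA : ℝ} (hCA : 0 ≤ CA) (M : Matrix (Fin I) (Fin I) ℝ)
    (hM : M.IsSymm) (hpos : ∀ w, 0 ≤ M.mulVec w ⬝ᵥ w)
    (hub : ∀ w, M.mulVec w ⬝ᵥ w ≤ CA * (w ⬝ᵥ w)) (v : Fin I → ℝ) :
    (M.mulVec v) ⬝ᵥ (M.mulVec v) ≤ CA ^ 2 * (v ⬝ᵥ v) := by
  set a := M.mulVec v with ha
  have h1 : (M.mulVec v ⬝ᵥ a) ^ 2 ≤ (M.mulVec v ⬝ᵥ v) * (M.mulVec a ⬝ᵥ a) :=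
    quad_CS M hM hpos v a
  have h2 := hub v
  have h3 := hub a
  have h4 : 0 ≤ a ⬝ᵥ a := dot_self_nonneg' a
  have h5 : 0 ≤ v ⬝ᵥ v := dot_self_nonneg' v
  have h6 : 0 ≤ M.mulVec v ⬝ᵥ v := hpos v
  have h7 : 0 ≤ M.mulVec a ⬝ᵥ a := hpos a
  rcases eq_or_lt_of_le h4 with h | h
  · rw [← h]; positivity
  · nlinarith [h1]

private lemma dot_bound {CA : ℝ} (hCA : 0 ≤ CA) (M : Matrix (Fin I) (Fin I) ℝ)
    (hM : M.IsSymm) (hpos : ∀ w, 0 ≤ M.mulVec w ⬝ᵥ w)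
    (hub : ∀ w, M.mulVec w ⬝ᵥ w ≤ CA * (w ⬝ᵥ w)) (a b : EuclideanSpace ℝ (Fin I)) :
    |M.mulVec a ⬝ᵥ b| ≤ CA * ‖a‖ * ‖b‖ := by
  have h1 := quad_CS M hM hpos a b
  have h2 := hub a
  have h3 := hub b
  have h4 := dot_self_eq_norm_sq a
  have h5 := dot_self_eq_norm_sq b
  have h7 : (M.mulVec a ⬝ᵥ a) * (M.mulVec b ⬝ᵥ b) ≤ (CA * ‖a‖ ^ 2) * (CA * ‖b‖ ^ 2) :=
    mul_le_mul (h4 ▸ h2) (h5 ▸ h3) (hpos b) (by positivity)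
  have h6 : (M.mulVec a ⬝ᵥ b) ^ 2 ≤ (CA * ‖a‖ * ‖b‖) ^ 2 := by
    calc (M.mulVec a ⬝ᵥ b) ^ 2 ≤ (CA * ‖a‖ ^ 2) * (CA * ‖b‖ ^ 2) := le_trans h1 h7
    _ = (CA * ‖a‖ * ‖b‖) ^ 2 := by ring
  have := Real.sqrt_le_sqrt h6
  rwa [Real.sqrt_sq_eq_abs, Real.sqrt_sq (by positivity)] at this



private lemma measurable_comp_simpleFunc {β : Type*} [MeasurableSpace β] (f : α → β → ℝ)
    (hf : ∀ z, Measurable fun x => f x z) (s : SimpleFunc α β) :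
    Measurable fun x => f x (s x) := by
  classical
  have heq : (fun x => f x (s x)) =
      fun x => ∑ c ∈ s.range, if s x = c then f x c else 0 := by
    funext x
    rw [Finset.sum_ite_eq s.range (s x) fun c => f x c]
    simp [SimpleFunc.mem_range_self]
  rw [heq]
  apply Finset.measurable_sum
  intro c _
  exact Measurable.ite (s.measurableSet_fiber c) (hf c) measurable_const

private lemma carath_aemeasurable
    (A : α → (Fin I → ℝ) → Matrix (Fin I) (Fin I) ℝ)
    (hmeas : ∀ (z : Fin I → ℝ) (i j : Fin I), Measurable fun x => A x z i j)
    (hcont : ∀ᵐ x ∂μ, ∀ i j : Fin I, Continuous fun z => A x z i j)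
    (w : α → EuclideanSpace ℝ (Fin I)) (hw : AEStronglyMeasurable w μ) (i j : Fin I) :
    AEMeasurable (fun x => A x (w x) i j) μ := by
  have hw' := hw.stronglyMeasurable_mk
  refine aemeasurable_of_tendsto_metrizable_ae'
    (f := fun k x => A x (hw'.approx k x) i j)
    (fun k => (measurable_comp_simpleFunc (fun x (z : EuclideanSpace ℝ (Fin I)) => A x z i j)
      (fun z => hmeas z i j) (hw'.approx k)).aemeasurable) ?_
  filter_upwards [hcont, hw.ae_eq_mk] with x hc hx
  have ht : Tendsto (fun k => hw'.approx k x) atTop (𝓝 (hw.mk w x)) := hw'.tendsto_approx x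
  have hcE : Continuous fun z : EuclideanSpace ℝ (Fin I) => A x z i j :=
    (hc i j).comp (PiLp.continuous_ofLp (p := 2) (β := fun _ : Fin I => ℝ))
  rw [hx]
  exact (hcE.tendsto _).comp ht

private lemma aemeasurable_dot {f g : α → Fin I → ℝ}
    (hf : ∀ i, AEMeasurable (fun x => f x i) μ) (hg : ∀ i, AEMeasurable (fun x => g x i) μ) :
    AEMeasurable (fun x => f x ⬝ᵥ g x) μ := by
  simp only [dotProduct]
  exact Finset.aemeasurable_fun_sum _ fun i _ => (hf i).mul (hg i)

private lemma aemeasurable_mulVec_apply {B : α → Matrix (Fin I) (Fin I) ℝ} {v : α → Fin I → ℝ}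
    (hB : ∀ i j, AEMeasurable (fun x => B x i j) μ)
    (hv : ∀ i, AEMeasurable (fun x => v x i) μ) (i : Fin I) :
    AEMeasurable (fun x => (B x).mulVec (v x) i) μ := by
  simp only [Matrix.mulVec, dotProduct]
  exact Finset.aemeasurable_fun_sum _ fun j _ => (hB i j).mul (hv j)

private lemma continuous_mulVec {β : Type*} [TopologicalSpace β]
    (M : β → Matrix (Fin I) (Fin I) ℝ)
    (hM : ∀ i j, Continuous fun z => M z i j) (a : Fin I → ℝ) :
    Continuous fun z => (M z).mulVec a := by
  apply continuous_pi; intro i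
  simp only [Matrix.mulVec, dotProduct]
  exact continuous_finset_sum _ fun j _ => (hM i j).mul continuous_const

private lemma continuous_dot {β : Type*} [TopologicalSpace β] {f g : β → Fin I → ℝ}
    (hf : Continuous f) (hg : Continuous g) : Continuous fun z => f z ⬝ᵥ g z := by
  simp only [dotProduct]
  exact continuous_finset_sum _ fun i _ =>
    ((continuous_apply i).comp hf).mul ((continuous_apply i).comp hg)

private lemma integrable_norm_mul {E : Type*} [NormedAddCommGroup E]
    [InnerProductSpace ℝ E] (v w : Lp E 2 μ) :
    Integrable (fun x => ‖v x‖ * ‖w x‖) μ := by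
  have h1 : MemLp (fun x => ‖v x‖) 2 μ := (Lp.memLp v).norm
  have h2 : MemLp (fun x => ‖w x‖) 2 μ := (Lp.memLp w).norm
  have h3 := L2.integrable_inner (𝕜 := ℝ) (h1.toLp _) (h2.toLp _)
  refine (integrable_congr ?_).mp h3
  filter_upwards [h1.coeFn_toLp, h2.coeFn_toLp] with x hx1 hx2
  rw [hx1, hx2]
  simp [RCLike.inner_apply, mul_comm]

private lemma inner_eq_dot (a b : EuclideanSpace ℝ (Fin I)) :
    (inner ℝ a b : ℝ) = (a : Fin I → ℝ) ⬝ᵥ (b : Fin I → ℝ) := by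
  simp [PiLp.inner_apply, RCLike.inner_apply, dotProduct, mul_comm]

private lemma tendsto_integral_comp
    (F : α → (Fin I → ℝ) → ℝ) (bound : α → ℝ)
    (un : ℕ → α → EuclideanSpace ℝ (Fin I)) (u : α → EuclideanSpace ℝ (Fin I))
    (hmeasn : ∀ n, AEStronglyMeasurable (fun x => F x (un n x)) μ)
    (hcont : ∀ᵐ x ∂μ, Continuous (F x))
    (hbdd : ∀ᵐ x ∂μ, ∀ z, |F x z| ≤ bound x)
    (hbound : Integrable bound μ)
    (hconv : TendstoInMeasure μ un atTop u) :
    Tendsto (fun n => ∫ x, F x (un n x) ∂μ) atTop (𝓝 (∫ x, F x (u x) ∂μ)) := by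
  refine tendsto_of_subseq_tendsto fun ns hns => ?_
  have h1 : TendstoInMeasure μ (fun k => un (ns k)) atTop u := fun ε hε => (hconv ε hε).comp hns
  obtain ⟨ms, hms_mono, hae⟩ := h1.exists_seq_tendsto_ae
  refine ⟨ms, ?_⟩
  apply tendsto_integral_of_dominated_convergence bound (fun k => hmeasn _) hbound
  · exact fun k => hbdd.mono fun x hx => by simpa [Real.norm_eq_abs] using hx _
  · filter_upwards [hae, hcont] with x hx hc
    have hxE : Tendsto (fun k => (un (ns (ms k)) x).ofLp) atTop
        (𝓝 ((u x).ofLp)) :=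
      ((PiLp.continuous_ofLp (p := 2) (β := fun _ : Fin I => ℝ)).tendsto _).comp hx
    exact (hc.tendsto _).comp hxE


private lemma diff_dot_bound {CA : ℝ} (hCA : 0 ≤ CA) (M N : Matrix (Fin I) (Fin I) ℝ)
    (hMs : M.IsSymm) (hMp : ∀ w, 0 ≤ M.mulVec w ⬝ᵥ w)
    (hMu : ∀ w, M.mulVec w ⬝ᵥ w ≤ CA * (w ⬝ᵥ w))
    (hNs : N.IsSymm) (hNp : ∀ w, 0 ≤ N.mulVec w ⬝ᵥ w)
    (hNu : ∀ w, N.mulVec w ⬝ᵥ w ≤ CA * (w ⬝ᵥ w)) (a : EuclideanSpace ℝ (Fin I)) :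
    |(M.mulVec a - N.mulVec a) ⬝ᵥ (M.mulVec a - N.mulVec a)| ≤ 4 * CA ^ 2 * (‖a‖ * ‖a‖) := by
  have hM1 := mulVec_dot_self_le hCA M hMs hMp hMu a
  have hN1 := mulVec_dot_self_le hCA N hNs hNp hNu a
  have hplus := dot_self_nonneg' (M.mulVec a + N.mulVec a)
  have hs := dot_self_eq_norm_sq a
  have hcomm : N.mulVec (a : Fin I → ℝ) ⬝ᵥ M.mulVec (a : Fin I → ℝ) =
      M.mulVec (a : Fin I → ℝ) ⬝ᵥ N.mulVec (a : Fin I → ℝ) := dotProduct_comm _ _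
  rw [abs_of_nonneg (dot_self_nonneg' _)]
  simp only [sub_dotProduct, dotProduct_sub, add_dotProduct,
    dotProduct_add] at *
  nlinarith [norm_nonneg a, sq_nonneg ‖a‖]

private lemma aemeasurable_pi_of_components {ι : Type*} [Countable ι] {f : α → ι → ℝ}
    (h : ∀ i, AEMeasurable (fun x => f x i) μ) : AEMeasurable f μ :=
  ⟨fun x i => (h i).mk _ x, measurable_pi_lambda _ fun i => (h i).measurable_mk,
    (ae_all_iff.mpr fun i => (h i).ae_eq_mk).mono fun x hx => funext hx⟩

end aux


/-- The state-dependent quadratic dissipation potential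
`Ψ_u(v) = ∫_Ω ½ ⟨A(x,u(x)) v(x), v(x)⟩ dx` on `L²(Ω;ℝ^I)`. -/
def dissipQuad (d I : ℕ) (Ω : Set (EuclideanSpace ℝ (Fin d)))
    (A : EuclideanSpace ℝ (Fin d) → (Fin I → ℝ) → Matrix (Fin I) (Fin I) ℝ)
    (u v : Lp (EuclideanSpace ℝ (Fin I)) 2 (volume.restrict Ω)) : ℝ :=
  ∫ x, (1/2) * ((A x (u x)).mulVec (v x) ⬝ᵥ (v x)) ∂(volume.restrict Ω)

/-- **Mosco continuity of state-dependent quadratic dissipation potentials on `L²`**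
(Proposition 4.1, step (2.Ψc)). If `A` is a symmetric, uniformly elliptic and bounded
Carathéodory matrix function and `u_n → u` strongly in `L²(Ω;ℝ^I)`, then `Ψ_{u_n}`
Mosco-converges to `Ψ_u`: (i) the weak liminf estimate holds, and (ii) `Ψ_{u_n}(v) → Ψ_u(v)`
for every `v`, so that constant sequences are (strong) recovery sequences. -/
theorem mosco_quadratic_dissipation (d I : ℕ) (Ω : Set (EuclideanSpace ℝ (Fin d)))
    (hΩopen : IsOpen Ω) (hΩbdd : Bornology.IsBounded Ω)
    (A : EuclideanSpace ℝ (Fin d) → (Fin I → ℝ) → Matrix (Fin I) (Fin I) ℝ)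
    (CA : ℝ) (hCA : 1 ≤ CA)
    (hsymm : ∀ x z, (A x z).IsSymm)
    (hmeas : ∀ (z : Fin I → ℝ) (i j : Fin I), Measurable (fun x => A x z i j))
    (hcont : ∀ᵐ x ∂(volume.restrict Ω), ∀ i j : Fin I, Continuous (fun z => A x z i j))
    (hell : ∀ x (z w : Fin I → ℝ),
      CA⁻¹ * (w ⬝ᵥ w) ≤ (A x z).mulVec w ⬝ᵥ w ∧ (A x z).mulVec w ⬝ᵥ w ≤ CA * (w ⬝ᵥ w))
    (un : ℕ → Lp (EuclideanSpace ℝ (Fin I)) 2 (volume.restrict Ω))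
    (u : Lp (EuclideanSpace ℝ (Fin I)) 2 (volume.restrict Ω))
    (hun : Tendsto un atTop (𝓝 u)) :
    (∀ (v : Lp (EuclideanSpace ℝ (Fin I)) 2 (volume.restrict Ω))
       (vn : ℕ → Lp (EuclideanSpace ℝ (Fin I)) 2 (volume.restrict Ω)),
      (∀ w : Lp (EuclideanSpace ℝ (Fin I)) 2 (volume.restrict Ω),
        Tendsto (fun n => (inner ℝ (vn n) w : ℝ)) atTop (𝓝 (inner ℝ v w))) →
      ((dissipQuad d I Ω A u v : ℝ) : EReal) ≤
        Filter.liminf (fun n => ((dissipQuad d I Ω A (un n) (vn n) : ℝ) : EReal)) atTop)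
    ∧ ∀ v : Lp (EuclideanSpace ℝ (Fin I)) 2 (volume.restrict Ω),
        Tendsto (fun n => dissipQuad d I Ω A (un n) v) atTop
          (𝓝 (dissipQuad d I Ω A u v)) := by

  have hCA0 : (0:ℝ) < CA := lt_of_lt_of_le one_pos hCA
  have hpos : ∀ x z (w : Fin I → ℝ), 0 ≤ (A x z).mulVec w ⬝ᵥ w := fun x z w =>
    le_trans (mul_nonneg (by positivity) (dot_self_nonneg' w)) (hell x z w).1
  have hub : ∀ x z (w : Fin I → ℝ), (A x z).mulVec w ⬝ᵥ w ≤ CA * (w ⬝ᵥ w) :=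
    fun x z w => (hell x z w).2
  have hcomp : ∀ (w : Lp (EuclideanSpace ℝ (Fin I)) 2 (volume.restrict Ω)) (i : Fin I),
      AEMeasurable (fun x => w x i) (volume.restrict Ω) := fun w i =>
    (measurable_pi_apply i).comp_aemeasurable ((PiLp.continuous_ofLp (p := 2) (β := fun _ : Fin I => ℝ)).measurable.comp_aemeasurable (Lp.aestronglyMeasurable w).aemeasurable)
  have hA : ∀ (w : Lp (EuclideanSpace ℝ (Fin I)) 2 (volume.restrict Ω)) (i j : Fin I),
      AEMeasurable (fun x => A x (w x) i j) (volume.restrict Ω) :=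
    fun w i j => carath_aemeasurable A hmeas hcont _ (Lp.aestronglyMeasurable w) i j
  have haesm : ∀ (w v₁ v₂ : Lp (EuclideanSpace ℝ (Fin I)) 2 (volume.restrict Ω)),
      AEStronglyMeasurable (fun x => (A x (w x)).mulVec (v₁ x) ⬝ᵥ (v₂ x))
        (volume.restrict Ω) := fun w v₁ v₂ =>
    (aemeasurable_dot (fun i => aemeasurable_mulVec_apply (hA w) (hcomp v₁) i)
      (hcomp v₂)).aestronglyMeasurable
  have hInt : ∀ (w v₁ v₂ : Lp (EuclideanSpace ℝ (Fin I)) 2 (volume.restrict Ω)),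
      Integrable (fun x => (A x (w x)).mulVec (v₁ x) ⬝ᵥ (v₂ x)) (volume.restrict Ω) := by
    intro w v₁ v₂
    refine Integrable.mono' ((integrable_norm_mul v₁ v₂).const_mul CA) (haesm w v₁ v₂) ?_
    refine Eventually.of_forall fun x => ?_
    rw [Real.norm_eq_abs]
    calc |(A x (w x)).mulVec (v₁ x) ⬝ᵥ (v₂ x)| ≤ CA * ‖v₁ x‖ * ‖v₂ x‖ :=
        dot_bound hCA0.le _ (hsymm _ _) (hpos x _) (hub x _) _ _
      _ = CA * (‖v₁ x‖ * ‖v₂ x‖) := by ring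
  have hvecnorm : ∀ x z (a b : EuclideanSpace ℝ (Fin I)),
      (b : Fin I → ℝ) = (A x z).mulVec a → ‖b‖ ≤ CA * ‖a‖ := by
    intro x z a b hb
    have h := mulVec_dot_self_le hCA0.le (A x z) (hsymm x z) (hpos x z) (hub x z) a
    have h2 := dot_self_eq_norm_sq b
    have h3 := dot_self_eq_norm_sq a
    have h4 : ‖b‖^2 ≤ (CA * ‖a‖)^2 := by
      rw [← hb] at h; rw [h2, h3] at h; nlinarith [h]
    have h5 := Real.sqrt_le_sqrt h4
    rwa [Real.sqrt_sq (norm_nonneg _), Real.sqrt_sq (by positivity)] at h5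
  have hMem : ∀ (w v : Lp (EuclideanSpace ℝ (Fin I)) 2 (volume.restrict Ω)),
      MemLp (ε := EuclideanSpace ℝ (Fin I)) (fun x => WithLp.toLp 2 ((A x (w x)).mulVec (v x))) 2
        (volume.restrict Ω) := by
    intro w v
    refine MemLp.of_le ((Lp.memLp v).const_smul CA) ?_ ?_
    · exact ((PiLp.continuous_toLp (p := 2) (β := fun _ : Fin I => ℝ)).measurable.comp_aemeasurable
        (aemeasurable_pi_of_components fun i =>
        aemeasurable_mulVec_apply (hA w) (hcomp v) i)).aestronglyMeasurable
    · refine Eventually.of_forall fun x => ?_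
      rw [Pi.smul_apply, norm_smul, Real.norm_eq_abs, abs_of_pos hCA0]
      exact hvecnorm x (w x) (v x) _ rfl
  have hconvM : TendstoInMeasure (volume.restrict Ω) (fun n => ⇑(un n)) atTop ⇑u := by
    have h0 : Tendsto (fun n => eLpNorm (⇑(un n) - ⇑u) 2 (volume.restrict Ω)) atTop (𝓝 0) :=
      (Lp.tendsto_Lp_iff_tendsto_eLpNorm' un u).mp hun
    exact tendstoInMeasure_of_tendsto_eLpNorm (by norm_num)
      (fun n => Lp.aestronglyMeasurable _) (Lp.aestronglyMeasurable _) h0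
  have key : ∀ v w : Lp (EuclideanSpace ℝ (Fin I)) 2 (volume.restrict Ω),
      Tendsto (fun n => ∫ x, (A x (un n x)).mulVec (v x) ⬝ᵥ (w x) ∂(volume.restrict Ω)) atTop
        (𝓝 (∫ x, (A x (u x)).mulVec (v x) ⬝ᵥ (w x) ∂(volume.restrict Ω))) := by
    intro v w
    refine tendsto_integral_comp (fun x z => (A x z).mulVec (v x) ⬝ᵥ (w x))
      (fun x => CA * (‖v x‖ * ‖w x‖)) (fun n => ⇑(un n)) ⇑u
      (fun n => haesm (un n) v w) ?_ ?_ ((integrable_norm_mul v w).const_mul CA) hconvM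
    · filter_upwards [hcont] with x hc
      exact continuous_dot (continuous_mulVec _ hc _) continuous_const
    · refine Eventually.of_forall fun x z => ?_
      calc |(A x z).mulVec (v x) ⬝ᵥ (w x)| ≤ CA * ‖v x‖ * ‖w x‖ :=
          dot_bound hCA0.le _ (hsymm _ _) (hpos x _) (hub x _) _ _
        _ = CA * (‖v x‖ * ‖w x‖) := by ring
  have part2 : ∀ v : Lp (EuclideanSpace ℝ (Fin I)) 2 (volume.restrict Ω),
      Tendsto (fun n => dissipQuad d I Ω A (un n) v) atTop
        (𝓝 (dissipQuad d I Ω A u v)) := by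
    intro v
    have h := (key v v).const_mul (1/2 : ℝ)
    simpa only [dissipQuad, integral_const_mul] using h
  refine ⟨?_, part2⟩
  intro v vn hv
  obtain ⟨G, hG⟩ : ∃ G : Lp (EuclideanSpace ℝ (Fin I)) 2 (volume.restrict Ω),
      ⇑G =ᵐ[volume.restrict Ω] fun x => WithLp.toLp 2 ((A x (u x)).mulVec (v x)) :=
    ⟨(hMem u v).toLp _, MemLp.coeFn_toLp _⟩
  obtain ⟨Gn, hGn⟩ : ∃ Gn : ℕ → Lp (EuclideanSpace ℝ (Fin I)) 2 (volume.restrict Ω),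
      ∀ n, ⇑(Gn n) =ᵐ[volume.restrict Ω] fun x => WithLp.toLp 2 ((A x (un n x)).mulVec (v x)) :=
    ⟨fun n => (hMem (un n) v).toLp _, fun n => MemLp.coeFn_toLp _⟩
  have hGn_inner : ∀ n (q : Lp (EuclideanSpace ℝ (Fin I)) 2 (volume.restrict Ω)),
      (inner ℝ (Gn n) q : ℝ) =
        ∫ x, (A x (un n x)).mulVec (v x) ⬝ᵥ (q x) ∂(volume.restrict Ω) := by
    intro n q
    rw [L2.inner_def]
    apply integral_congr_ae
    filter_upwards [hGn n] with x hx
    rw [hx, inner_eq_dot]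
  have hG_inner : ∀ q : Lp (EuclideanSpace ℝ (Fin I)) 2 (volume.restrict Ω),
      (inner ℝ G q : ℝ) =
        ∫ x, (A x (u x)).mulVec (v x) ⬝ᵥ (q x) ∂(volume.restrict Ω) := by
    intro q
    rw [L2.inner_def]
    apply integral_congr_ae
    filter_upwards [hG] with x hx
    rw [hx, inner_eq_dot]
  have claim : ∀ n, (inner ℝ (Gn n) (vn n) : ℝ)
      - dissipQuad d I Ω A (un n) v ≤ dissipQuad d I Ω A (un n) (vn n) := by
    intro n
    have hmono : ∫ x, ((A x (un n x)).mulVec (v x) ⬝ᵥ (vn n x)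
          - (1/2) * ((A x (un n x)).mulVec (v x) ⬝ᵥ (v x))) ∂(volume.restrict Ω) ≤
        ∫ x, (1/2) * ((A x (un n x)).mulVec (vn n x) ⬝ᵥ (vn n x)) ∂(volume.restrict Ω) := by
      refine integral_mono ((hInt (un n) v (vn n)).sub ((hInt (un n) v v).const_mul (1/2)))
        ((hInt (un n) (vn n) (vn n)).const_mul (1/2)) fun x => ?_
      exact quad_lower (A x (un n x)) (hsymm _ _) (hpos x _) (vn n x) (v x)
    rw [integral_sub (hInt (un n) v (vn n)) ((hInt (un n) v v).const_mul (1/2))] at hmono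
    rw [hGn_inner n (vn n)]
    simpa only [dissipQuad, integral_const_mul] using hmono
  obtain ⟨M0, hM0⟩ : ∃ M0 : ℝ, ∀ n, ‖vn n‖ ≤ M0 := by
    have hpt : ∀ w : Lp (EuclideanSpace ℝ (Fin I)) 2 (volume.restrict Ω),
        ∃ C, ∀ n : ℕ, ‖(innerSL ℝ (vn n)) w‖ ≤ C := by
      intro w
      obtain ⟨C, hC⟩ := ((hv w).norm).bddAbove_range
      exact ⟨C, fun n => by simpa [innerSL_apply_apply] using hC (Set.mem_range_self n)⟩
    obtain ⟨C', hC'⟩ := banach_steinhaus hpt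
    exact ⟨C', fun n => by rw [← innerSL_apply_norm (𝕜 := ℝ) (vn n)]; exact hC' n⟩
  have conv2 : Tendsto (fun n => ∫ x,
      (((A x (un n x)).mulVec (v x) - (A x (u x)).mulVec (v x)) ⬝ᵥ
       ((A x (un n x)).mulVec (v x) - (A x (u x)).mulVec (v x))) ∂(volume.restrict Ω))
      atTop (𝓝 0) := by
    have hc2 : ∀ᵐ x ∂(volume.restrict Ω), Continuous fun z : Fin I → ℝ =>
        (((A x z).mulVec (v x) - (A x (u x)).mulVec (v x)) ⬝ᵥ
         ((A x z).mulVec (v x) - (A x (u x)).mulVec (v x))) := by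
      filter_upwards [hcont] with x hc
      exact continuous_dot ((continuous_mulVec _ hc _).sub continuous_const)
        ((continuous_mulVec _ hc _).sub continuous_const)
    have hb2 : ∀ᵐ x ∂(volume.restrict Ω), ∀ z : Fin I → ℝ,
        |(((A x z).mulVec (v x) - (A x (u x)).mulVec (v x)) ⬝ᵥ
          ((A x z).mulVec (v x) - (A x (u x)).mulVec (v x)))| ≤
          4 * CA^2 * (‖v x‖ * ‖v x‖) := by
      refine Eventually.of_forall fun x z => ?_
      exact diff_dot_bound hCA0.le _ _ (hsymm _ _) (hpos x _) (hub x _)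
        (hsymm _ _) (hpos x _) (hub x _) (v x)
    have h0 := tendsto_integral_comp
      (fun x z => (((A x z).mulVec (v x) - (A x (u x)).mulVec (v x)) ⬝ᵥ
        ((A x z).mulVec (v x) - (A x (u x)).mulVec (v x))))
      (fun x => 4 * CA^2 * (‖v x‖ * ‖v x‖)) (fun n => ⇑(un n)) ⇑u
      (fun n => (aemeasurable_dot
        (fun i => ((aemeasurable_mulVec_apply (hA (un n)) (hcomp v) i).sub
          (aemeasurable_mulVec_apply (hA u) (hcomp v) i)))
        (fun i => ((aemeasurable_mulVec_apply (hA (un n)) (hcomp v) i).sub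
          (aemeasurable_mulVec_apply (hA u) (hcomp v) i)))).aestronglyMeasurable)
      hc2 hb2 ((integrable_norm_mul v v).const_mul (4 * CA^2)) hconvM
    simpa only [sub_self, zero_dotProduct, integral_zero] using h0
  have hGdiff : Tendsto (fun n => ‖Gn n - G‖) atTop (𝓝 0) := by
    have hsq : Tendsto (fun n => ‖Gn n - G‖^2) atTop (𝓝 0) := by
      refine conv2.congr fun n => ?_
      rw [← real_inner_self_eq_norm_sq, L2.inner_def]
      apply integral_congr_ae
      filter_upwards [Lp.coeFn_sub (Gn n) G, hGn n, hG] with x hx1 hx2 hx3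
      rw [hx1, Pi.sub_apply, hx2, hx3, inner_eq_dot]
      rfl
    have h2 := (Real.continuous_sqrt.tendsto 0).comp hsq
    simp only [Real.sqrt_zero] at h2
    exact h2.congr fun n => Real.sqrt_sq (norm_nonneg _)
  have hG2 : (inner ℝ G v : ℝ) = 2 * dissipQuad d I Ω A u v := by
    rw [hG_inner v]
    simp only [dissipQuad, integral_const_mul]
    ring
  have hGv : Tendsto (fun n => (inner ℝ G (vn n) : ℝ)) atTop (𝓝 ((inner ℝ G v : ℝ))) := by
    have h2 : Tendsto (fun n => (inner ℝ G (vn n) : ℝ)) atTop (𝓝 ((inner ℝ v G : ℝ))) :=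
      (hv G).congr fun n => (real_inner_comm (vn n) G).symm
    rwa [real_inner_comm G v] at h2
  have hz : Tendsto (fun n => (inner ℝ (Gn n - G) (vn n) : ℝ)) atTop (𝓝 0) := by
    refine squeeze_zero_norm (fun n => ?_) (by simpa using hGdiff.mul_const M0)
    calc ‖(inner ℝ (Gn n - G) (vn n) : ℝ)‖
        ≤ ‖Gn n - G‖ * ‖vn n‖ := norm_inner_le_norm _ _
      _ ≤ ‖Gn n - G‖ * M0 := mul_le_mul_of_nonneg_left (hM0 n) (norm_nonneg _)
  have hRHS : Tendsto (fun n => (inner ℝ (Gn n) (vn n) : ℝ)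
      - dissipQuad d I Ω A (un n) v) atTop (𝓝 (dissipQuad d I Ω A u v)) := by
    have hsum := (hGv.add hz).sub (part2 v)
    have hval : (inner ℝ G v : ℝ) + 0 - dissipQuad d I Ω A u v
        = dissipQuad d I Ω A u v := by rw [hG2]; ring
    rw [hval] at hsum
    refine hsum.congr fun n => ?_
    rw [inner_sub_left]
    ring
  calc ((dissipQuad d I Ω A u v : ℝ) : EReal)
      = Filter.liminf (fun n => (((inner ℝ (Gn n) (vn n) : ℝ)
          - dissipQuad d I Ω A (un n) v : ℝ) : EReal)) atTop :=
        ((EReal.tendsto_coe.mpr hRHS).liminf_eq).symm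
    _ ≤ Filter.liminf (fun n => ((dissipQuad d I Ω A (un n) (vn n) : ℝ) : EReal)) atTop := by
        exact liminf_le_liminf
          (Eventually.of_forall fun n => EReal.coe_le_coe_iff.mpr (claim n))
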